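/- A subset X of B(n) \ {0} with no idempotents generates a (full) inverse subsemigroup of B(n) minimally if and only if the underlying undirected graph of X is an oriented (spanning) forest of the complete graph K_n. -/

import Mathlib

/-- The aperiodic Brandt semigroup `B(n)` on `({1..n} × {1..n}) ∪ {0}`,
with `none` playing the role of the zero element. -/
abbrev B (n : ℕ) := Option (Fin n × Fin n)

/-- Multiplication in `B(n)`: `(i,j)(k,l) = (i,l)` if `j = k`, and `0` otherwise. -/
def bmul {n : ℕ} : B n → B n → B n
  | some (i, j), some (k, l) => if j = k then some (i, l) else none
  | _, _ => none

/-- A subset of `B(n)` is a subsemigroup if it is closed under multiplication. -/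
def IsSub {n : ℕ} (T : Set (B n)) : Prop :=
  ∀ x ∈ T, ∀ y ∈ T, bmul x y ∈ T

/-- The subsemigroup of `B(n)` generated by a subset. -/
def gen {n : ℕ} (X : Set (B n)) : Set (B n) :=
  ⋂₀ {T | IsSub T ∧ X ⊆ T}

/-- `X` is a face of the subsemigroup complex `H(B(n))`: it admits an enumeration
producing a strictly increasing chain of generated subsemigroups. -/
def IsFace {n : ℕ} (X : Set (B n)) : Prop :=
  ∃ l : List (B n), l.Nodup ∧ {x | x ∈ l} = X ∧
    ∀ (i : ℕ) (h : i < l.length), l.get ⟨i, h⟩ ∉ gen {x | x ∈ l.take i}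

/-- A facet is a maximal face. -/
def IsFacet {n : ℕ} (X : Set (B n)) : Prop :=
  IsFace X ∧ ∀ Y : Set (B n), IsFace Y → X ⊆ Y → X = Y

/-- Product `x * y₁ * ⋯ * y_k` in `B(n)`. -/
def bprod {n : ℕ} : B n → List (B n) → B n
  | x, [] => x
  | x, y :: l => bprod (bmul x y) l

/-- Closure under the inverse operation `(i,j) ↦ (j,i)`. -/
def InvClosed {n : ℕ} (T : Set (B n)) : Prop :=
  ∀ i j : Fin n, some (i, j) ∈ T → some (j, i) ∈ T

/-- A nilpotent subsemigroup of `B(n)` containing `0`: some power is `{0}`. -/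
def IsNilpSub {n : ℕ} (T : Set (B n)) : Prop :=
  IsSub T ∧ none ∈ T ∧ ∃ k : ℕ, 1 ≤ k ∧
    ∀ (x : B n) (l : List (B n)), x ∈ T → (∀ y ∈ l, y ∈ T) →
      l.length + 1 = k → bprod x l = none
/-- The inverse subsemigroup of `B(n)` generated by `X`. -/
def invGen {n : ℕ} (X : Set (B n)) : Set (B n) :=
  ⋂₀ {T | IsSub T ∧ InvClosed T ∧ X ⊆ T}

/-- The full inverse subsemigroup of `B(n)` generated by `X` (containing all
idempotents). -/
def fullInvGen {n : ℕ} (X : Set (B n)) : Set (B n) :=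
  ⋂₀ {T | IsSub T ∧ InvClosed T ∧ none ∈ T ∧ (∀ i : Fin n, some (i, i) ∈ T) ∧ X ⊆ T}

namespace Stmt11Aux
open SimpleGraph

variable {n : ℕ}

def GG (X : Set (B n)) : SimpleGraph (Fin n) :=
  SimpleGraph.fromRel (fun i j : Fin n => some (i, j) ∈ X)

lemma invGen_isSub (X : Set (B n)) : IsSub (invGen X) := by
  intro x hx y hy T hT
  exact hT.1 x (hx T hT) y (hy T hT)

lemma invGen_invClosed (X : Set (B n)) : InvClosed (invGen X) :=
  fun i j h T hT => hT.2.1 i j (h T hT)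

lemma subset_invGen (X : Set (B n)) : X ⊆ invGen X :=
  fun _ hx T hT => hT.2.2 hx

lemma invGen_subset {X : Set (B n)} {T : Set (B n)} (h1 : IsSub T) (h2 : InvClosed T)
    (h3 : X ⊆ T) : invGen X ⊆ T := fun _ hx => hx T ⟨h1, h2, h3⟩

lemma invGen_mono {X Y : Set (B n)} (h : X ⊆ Y) : invGen X ⊆ invGen Y :=
  fun _ hx T hT => hx T ⟨hT.1, hT.2.1, h.trans hT.2.2⟩

lemma fullInvGen_isSub (X : Set (B n)) : IsSub (fullInvGen X) := by
  intro x hx y hy T hT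
  exact hT.1 x (hx T hT) y (hy T hT)

lemma fullInvGen_invClosed (X : Set (B n)) : InvClosed (fullInvGen X) :=
  fun i j h T hT => hT.2.1 i j (h T hT)

lemma none_mem_fullInvGen (X : Set (B n)) : (none : B n) ∈ fullInvGen X :=
  fun T hT => hT.2.2.1

lemma idem_mem_fullInvGen (X : Set (B n)) (i : Fin n) : some (i, i) ∈ fullInvGen X :=
  fun T hT => hT.2.2.2.1 i

lemma subset_fullInvGen (X : Set (B n)) : X ⊆ fullInvGen X :=
  fun _ hx T hT => hT.2.2.2.2 hx

lemma fullInvGen_subset {X : Set (B n)} {T : Set (B n)} (h1 : IsSub T) (h2 : InvClosed T)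
    (h3 : none ∈ T) (h4 : ∀ i : Fin n, some (i, i) ∈ T) (h5 : X ⊆ T) :
    fullInvGen X ⊆ T := fun _ hx => hx T ⟨h1, h2, h3, h4, h5⟩

lemma fullInvGen_mono {X Y : Set (B n)} (h : X ⊆ Y) : fullInvGen X ⊆ fullInvGen Y :=
  fun _ hx T hT => hx T ⟨hT.1, hT.2.1, hT.2.2.1, hT.2.2.2.1, h.trans hT.2.2.2.2⟩

lemma invGen_subset_fullInvGen (X : Set (B n)) : invGen X ⊆ fullInvGen X :=
  invGen_subset (fullInvGen_isSub X) (fullInvGen_invClosed X) (subset_fullInvGen X)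

/-- Products along a walk give membership. -/
lemma walk_mem {X : Set (B n)} : ∀ {a b : Fin n}, (GG X).Walk a b → a ≠ b →
    some (a, b) ∈ invGen X := by
  intro a b p
  induction p with
  | nil => intro h; exact absurd rfl h
  | @cons u v w hadj q ih =>
    intro _
    have h1 : some (u, v) ∈ invGen X := by
      rw [GG, SimpleGraph.fromRel_adj] at hadj
      rcases hadj.2 with h' | h'
      · exact subset_invGen X h'
      · exact invGen_invClosed X v u (subset_invGen X h')
    by_cases hvw : v = w
    · subst hvw; exact h1
    · have h2 := ih hvw
      have h3 := invGen_isSub X _ h1 _ h2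
      simpa [bmul] using h3

lemma mem_invGen_of_reachable {X : Set (B n)} {i j : Fin n} (hij : i ≠ j)
    (h : (GG X).Reachable i j) : some (i, j) ∈ invGen X := by
  obtain ⟨p⟩ := h
  exact walk_mem p hij

lemma reachable_of_mem_full {X : Set (B n)} {i j : Fin n}
    (h : some (i, j) ∈ fullInvGen X) : (GG X).Reachable i j := by
  have hT : {z : B n | ∀ a b : Fin n, z = some (a, b) → (GG X).Reachable a b} ∈
      {T : Set (B n) | IsSub T ∧ InvClosed T ∧ none ∈ T ∧
        (∀ i : Fin n, some (i, i) ∈ T) ∧ X ⊆ T} := by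
    refine ⟨?_, ?_, ?_, ?_, ?_⟩
    · intro x hx y hy a b heq
      rcases x with _ | ⟨c, d⟩
      · simp [bmul] at heq
      rcases y with _ | ⟨e, f⟩
      · simp [bmul] at heq
      by_cases hde : d = e
      · subst hde
        have hred : bmul (some (c, d)) (some (d, f)) = some (c, f) := by simp [bmul]
        rw [hred] at heq
        obtain ⟨h1, h2⟩ : c = a ∧ f = b := by simpa [Prod.ext_iff] using heq
        subst h1; subst h2
        exact (hx c d rfl).trans (hy d f rfl)
      · simp [bmul, hde] at heq
    · intro a b hab c d heq
      obtain ⟨h1, h2⟩ : b = c ∧ a = d := by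
        simpa [Prod.ext_iff] using heq
      subst h1; subst h2
      exact (hab a b rfl).symm
    · intro a b heq; simp at heq
    · intro c a b heq
      obtain ⟨h1, h2⟩ : c = a ∧ c = b := by simpa [Prod.ext_iff] using heq
      subst h1; subst h2
      exact Reachable.refl c
    · intro z hz a b heq
      subst heq
      by_cases hab : a = b
      · subst hab; exact Reachable.refl a
      · exact Adj.reachable (by rw [GG, SimpleGraph.fromRel_adj]; exact ⟨hab, Or.inl hz⟩)
  exact h _ hT i j rfl

lemma reachable_of_mem {X : Set (B n)} {i j : Fin n}
    (h : some (i, j) ∈ invGen X) : (GG X).Reachable i j :=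
  reachable_of_mem_full (invGen_subset_fullInvGen X h)

/-- Deleting the edge is at most deleting the generator. -/
lemma sdiff_le_del (X : Set (B n)) (i j : Fin n) :
    GG X \ SimpleGraph.fromEdgeSet {s(i, j)} ≤ GG (X \ {some (i, j)}) := by
  intro a b hab
  obtain ⟨h1, h2⟩ := hab
  rw [GG, SimpleGraph.fromRel_adj] at h1 ⊢
  refine ⟨h1.1, ?_⟩
  rw [SimpleGraph.fromEdgeSet_adj] at h2
  push_neg at h2
  have hne : s(a, b) ≠ s(i, j) := by
    intro hcon
    exact absurd (h2 (by simp [hcon])) (by simpa using h1.1)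
  rcases h1.2 with h' | h'
  · refine Or.inl ⟨h', ?_⟩
    intro hcon
    have : a = i ∧ b = j := by simpa [Prod.ext_iff] using hcon
    exact hne (Sym2.eq_iff.mpr (Or.inl this))
  · refine Or.inr ⟨h', ?_⟩
    intro hcon
    have : b = i ∧ a = j := by simpa [Prod.ext_iff] using hcon
    exact hne (Sym2.eq_iff.mpr (Or.inr ⟨this.2, this.1⟩))

/-- Deleting a generator is at most deleting the edge, when the reverse is absent. -/
lemma del_le_sdiff {X : Set (B n)} {i j : Fin n} (hnd : some (j, i) ∉ X) :
    GG (X \ {some (i, j)}) ≤ GG X \ SimpleGraph.fromEdgeSet {s(i, j)} := by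
  intro a b hab
  rw [GG, SimpleGraph.fromRel_adj] at hab
  have hmemX : some (a, b) ∈ X ∨ some (b, a) ∈ X := by
    rcases hab.2 with h' | h'
    · exact Or.inl h'.1
    · exact Or.inr h'.1
  have hne : s(a, b) ≠ s(i, j) := by
    intro hcon
    rw [Sym2.eq_iff] at hcon
    rcases hcon with ⟨rfl, rfl⟩ | ⟨rfl, rfl⟩
    · rcases hab.2 with h' | h'
      · exact h'.2 rfl
      · exact hnd h'.1
    · rcases hab.2 with h' | h'
      · exact hnd h'.1
      · exact h'.2 rfl
  constructor
  · rw [GG, SimpleGraph.fromRel_adj]; exact ⟨hab.1, hmemX⟩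
  · rw [SimpleGraph.fromEdgeSet_adj]
    rintro ⟨hmem, -⟩
    exact hne (by simpa using hmem)

/-- The combinatorial heart. -/
lemma key (X : Set (B n)) (hX : ∀ x ∈ X, ∃ i j : Fin n, i ≠ j ∧ x = some (i, j)) :
    ((GG X).IsAcyclic ∧ ∀ i j : Fin n, some (i, j) ∈ X → some (j, i) ∉ X) ↔
      ∀ i j : Fin n, i ≠ j → some (i, j) ∈ X →
        ¬ (GG (X \ {some (i, j)})).Reachable i j := by
  constructor
  · rintro ⟨hac, hnd⟩ i j hij hmem hre
    have hadj : (GG X).Adj i j := by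
      rw [GG, SimpleGraph.fromRel_adj]; exact ⟨hij, Or.inl hmem⟩
    have hb := (SimpleGraph.isAcyclic_iff_forall_edge_isBridge.mp hac)
      ((SimpleGraph.mem_edgeSet (GG X)).mpr hadj)
    rw [SimpleGraph.isBridge_iff] at hb
    exact hb (hre.mono (del_le_sdiff (hnd i j hmem)))
  · intro h
    have hnd : ∀ i j : Fin n, some (i, j) ∈ X → some (j, i) ∉ X := by
      intro i j hijX hjiX
      obtain ⟨a, b, hab, heq⟩ := hX _ hijX
      have hij : i ≠ j := by
        simp only [Option.some.injEq, Prod.mk.injEq] at heq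
        rintro rfl
        exact hab (heq.1.symm.trans heq.2)
      refine h i j hij hijX (Adj.reachable ?_)
      rw [GG, SimpleGraph.fromRel_adj]
      refine ⟨hij, Or.inr ⟨hjiX, ?_⟩⟩
      simp only [Set.mem_diff, Set.mem_singleton_iff, Option.some.injEq, Prod.mk.injEq]
      exact fun hc => hij hc.2
    refine ⟨SimpleGraph.isAcyclic_iff_forall_edge_isBridge.mpr ?_, hnd⟩
    intro e he
    induction e with
    | h i j =>
      rw [SimpleGraph.mem_edgeSet, GG, SimpleGraph.fromRel_adj] at he
      rw [SimpleGraph.isBridge_iff]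
      intro hre
      rcases he.2 with h' | h'
      · exact h i j he.1 h' (hre.mono (sdiff_le_del X i j))
      · refine h j i he.1.symm h' (hre.symm.mono ?_)
        rw [Sym2.eq_swap (a := i) (b := j)] at *
        exact sdiff_le_del X j i

lemma min_inv (X : Set (B n)) (hX : ∀ x ∈ X, ∃ i j : Fin n, i ≠ j ∧ x = some (i, j)) :
    (∀ Y : Set (B n), Y ⊂ X → invGen Y ≠ invGen X) ↔
      ∀ i j : Fin n, i ≠ j → some (i, j) ∈ X →
        ¬ (GG (X \ {some (i, j)})).Reachable i j := by
  constructor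
  · intro hmin i j hij hmem hre
    have hss : X \ {some (i, j)} ⊂ X := Set.sdiff_singleton_ssubset.mpr hmem
    refine hmin _ hss (Set.Subset.antisymm (invGen_mono hss.1) ?_)
    refine invGen_subset (invGen_isSub _) (invGen_invClosed _) ?_
    intro z hz
    by_cases hzx : z = some (i, j)
    · subst hzx; exact mem_invGen_of_reachable hij hre
    · refine subset_invGen (X \ {some (i, j)}) ?_
      exact Set.mem_diff_singleton.mpr ⟨hz, hzx⟩
  · intro h Y hY heq
    obtain ⟨x, hxX, hxY⟩ := Set.exists_of_ssubset hY
    obtain ⟨i, j, hij, rfl⟩ := hX _ hxX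
    have h1 : some (i, j) ∈ invGen Y := heq ▸ subset_invGen X hxX
    have hsub : Y ⊆ X \ {some (i, j)} := fun z hz =>
      Set.mem_diff_singleton.mpr ⟨hY.1 hz, fun hc => hxY (hc ▸ hz)⟩
    have h2 : some (i, j) ∈ invGen (X \ {some (i, j)}) := invGen_mono hsub h1
    exact h i j hij hxX (reachable_of_mem h2)

lemma min_full (X : Set (B n)) (hX : ∀ x ∈ X, ∃ i j : Fin n, i ≠ j ∧ x = some (i, j)) :
    (∀ Y : Set (B n), Y ⊂ X → fullInvGen Y ≠ fullInvGen X) ↔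
      ∀ i j : Fin n, i ≠ j → some (i, j) ∈ X →
        ¬ (GG (X \ {some (i, j)})).Reachable i j := by
  constructor
  · intro hmin i j hij hmem hre
    have hss : X \ {some (i, j)} ⊂ X := Set.sdiff_singleton_ssubset.mpr hmem
    refine hmin _ hss (Set.Subset.antisymm (fullInvGen_mono hss.1) ?_)
    refine fullInvGen_subset (fullInvGen_isSub _) (fullInvGen_invClosed _)
      (none_mem_fullInvGen _) (idem_mem_fullInvGen _) ?_
    intro z hz
    by_cases hzx : z = some (i, j)
    · subst hzx
      exact invGen_subset_fullInvGen _ (mem_invGen_of_reachable hij hre)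
    · refine subset_fullInvGen (X \ {some (i, j)}) ?_
      exact Set.mem_diff_singleton.mpr ⟨hz, hzx⟩
  · intro h Y hY heq
    obtain ⟨x, hxX, hxY⟩ := Set.exists_of_ssubset hY
    obtain ⟨i, j, hij, rfl⟩ := hX _ hxX
    have h1 : some (i, j) ∈ fullInvGen Y := heq ▸ subset_fullInvGen X hxX
    have hsub : Y ⊆ X \ {some (i, j)} := fun z hz =>
      Set.mem_diff_singleton.mpr ⟨hY.1 hz, fun hc => hxY (hc ▸ hz)⟩
    have h2 : some (i, j) ∈ fullInvGen (X \ {some (i, j)}) := fullInvGen_mono hsub h1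
    exact h i j hij hxX (reachable_of_mem_full h2)

end Stmt11Aux

/-- A set `X` of non-idempotents of `B(n)` is a minimal generating set of the
(full) inverse subsemigroup it generates iff `Γ(X)` is an oriented (spanning)
forest of `K_n`. -/



theorem stmt11 (n : ℕ) (X : Set (B n))
    (hX : ∀ x ∈ X, ∃ i j : Fin n, i ≠ j ∧ x = some (i, j)) :
    ((∀ Y : Set (B n), Y ⊂ X → invGen Y ≠ invGen X) ↔
      ((SimpleGraph.fromRel (fun i j : Fin n => some (i, j) ∈ X)).IsAcyclic ∧
        ∀ i j : Fin n, some (i, j) ∈ X → some (j, i) ∉ X)) ∧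
    ((∀ Y : Set (B n), Y ⊂ X → fullInvGen Y ≠ fullInvGen X) ↔
      ((SimpleGraph.fromRel (fun i j : Fin n => some (i, j) ∈ X)).IsAcyclic ∧
        ∀ i j : Fin n, some (i, j) ∈ X → some (j, i) ∉ X)) := by
  constructor
  · exact (Stmt11Aux.min_inv X hX).trans (Stmt11Aux.key X hX).symm
  · exact (Stmt11Aux.min_full X hX).trans (Stmt11Aux.key X hX).symm
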